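/- If n is a non-deficient number, then KL(n) > 0. -/

import Mathlib

open Real Finset

lemma log_lt_half (y : ℝ) (hy : 1 < y) : Real.log y < (y - y⁻¹) / 2 := by
  have h := Real.self_lt_sinh_iff.mpr (Real.log_pos hy)
  rwa [Real.sinh_log (by linarith)] at h

lemma chain (P Q : ℝ) (hP : 2 ≤ P) (hQ : P^2 ≤ Q) :
    (P - 1) * Real.log (P / (P - 1)) < (Q - 1) * Real.log (Q / (Q - 1)) := by
  have hP1 : (1:ℝ) < P := by linarith
  have hQ1 : (1:ℝ) < Q := by nlinarith
  have hy : (1:ℝ) < P / (P-1) := by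
    rw [lt_div_iff₀ (by linarith)]; linarith
  have h1 : (P - 1) * Real.log (P / (P - 1)) < (2*P - 1) / (2*P) := by
    have hl := log_lt_half _ hy
    have hPne : P ≠ 0 := by linarith
    have hP1ne : P - 1 ≠ 0 := by linarith
    calc (P - 1) * Real.log (P / (P - 1)) < (P-1) * ((P/(P-1) - (P/(P-1))⁻¹)/2) := by
          apply mul_lt_mul_of_pos_left hl (by linarith)
      _ = (2*P - 1) / (2*P) := by field_simp; ring
  have h2 : (2*P - 1) / (2*P) ≤ 1 - 1/Q := by
    rw [div_le_iff₀ (by linarith)]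
    have h5 : 2*P/Q ≤ 1 := by
      rw [div_le_one (by linarith)]; nlinarith
    have h6 : (1 - 1/Q) * (2*P) = 2*P - 2*P/Q := by ring
    linarith
  have h3 : 1 - 1/Q ≤ (Q - 1) * Real.log (Q / (Q - 1)) := by
    have hQpos : (0:ℝ) < Q / (Q-1) := by
      apply div_pos (by linarith) (by linarith)
    have hq := Real.one_sub_inv_le_log_of_pos hQpos
    have heq : 1 - (Q/(Q-1))⁻¹ = 1/Q := by
      rw [inv_div]; field_simp; ring
    rw [heq] at hq
    have := mul_le_mul_of_nonneg_left hq (by linarith : (0:ℝ) ≤ Q - 1)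
    have he : (Q-1) * (1/Q) = 1 - 1/Q := by field_simp
    linarith
  linarith

lemma perprime (p a : ℕ) (hp : p.Prime) (ha : 1 ≤ a) :
    Real.log ((∑ k ∈ Finset.range (a+1), p^k : ℕ) / (p:ℝ)^a)
      < (1 - 1/((∑ k ∈ Finset.range (a+1), p^k : ℕ) : ℝ)) * Real.log ((p:ℝ)/((p:ℝ)-1)) := by
  set P : ℝ := (p : ℝ) with hPdef
  have hP : 2 ≤ P := by rw [hPdef]; exact_mod_cast hp.two_le
  set Q : ℝ := P^(a+1) with hQdef
  have hQ : P^2 ≤ Q := by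
    apply pow_le_pow_right₀ (by linarith) (by omega)
  have hQ1 : (1:ℝ) < Q := by nlinarith
  have hS : ((∑ k ∈ Finset.range (a+1), p^k : ℕ) : ℝ) = (Q - 1)/(P - 1) := by
    push_cast
    have hne : (p:ℝ) ≠ 1 := by exact_mod_cast hp.one_lt.ne'
    rw [geom_sum_eq hne]
  rw [hS]
  have hPane : P^a ≠ 0 := by positivity
  have hP1 : (0:ℝ) < P - 1 := by linarith
  have hQ1' : (0:ℝ) < Q - 1 := by linarith
  have harg : (Q - 1)/(P - 1) / P^a = (P/(P-1)) / (Q/(Q-1)) := by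
    field_simp
    rw [hQdef]; ring
  rw [harg, Real.log_div (by positivity) (by positivity)]
  have hinv : 1/((Q-1)/(P-1)) = (P-1)/(Q-1) := by
    rw [one_div, inv_div]
  rw [hinv]
  have key := chain P Q hP hQ
  have hd : (P-1) * Real.log (P/(P-1)) / (Q-1) < Real.log (Q/(Q-1)) := by
    rw [div_lt_iff₀ hQ1']
    nlinarith [key]
  have : (1 - (P-1)/(Q-1)) * Real.log (P/(P-1))
      = Real.log (P/(P-1)) - (P-1) * Real.log (P/(P-1)) / (Q-1) := by
    field_simp
  rw [this]
  linarith

lemma logdiv (d : ℕ) (hd : 0 < d) :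
    Real.log ((d : ℝ) / (2 * (Nat.totient d : ℝ)))
      = (∑ p ∈ d.primeFactors, Real.log ((p:ℝ)/((p:ℝ)-1))) - Real.log 2 := by
  have hφ : 0 < Nat.totient d := Nat.totient_pos.mpr hd
  have hratio : (d:ℝ)/(Nat.totient d : ℝ) = ∏ p ∈ d.primeFactors, (p:ℝ)/((p:ℝ)-1) := by
    have h := Nat.totient_mul_prod_primeFactors d
    have hcast : (Nat.totient d : ℝ) * ∏ p ∈ d.primeFactors, (p:ℝ)
        = (d:ℝ) * ∏ p ∈ d.primeFactors, ((p:ℝ) - 1) := by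
      have hc := congrArg (Nat.cast : ℕ → ℝ) h
      push_cast at hc
      have hpr : ∏ i ∈ d.primeFactors, ((i - 1 : ℕ) : ℝ)
          = ∏ p ∈ d.primeFactors, ((p:ℝ) - 1) :=
        Finset.prod_congr rfl fun p hp =>
          Nat.cast_pred (Nat.pos_of_mem_primeFactors hp)
      rw [hpr] at hc
      exact hc
    have hprodne : (∏ p ∈ d.primeFactors, ((p:ℝ) - 1)) ≠ 0 := by
      apply Finset.prod_ne_zero_iff.mpr
      intro p hp
      have : (2:ℝ) ≤ p := by exact_mod_cast (Nat.prime_of_mem_primeFactors hp).two_le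
      linarith
    have hφne : (Nat.totient d : ℝ) ≠ 0 := by exact_mod_cast hφ.ne'
    rw [Finset.prod_div_distrib, div_eq_div_iff hφne hprodne]
    linear_combination -hcast
  have hdpos : (0:ℝ) < d := by exact_mod_cast hd
  have hφpos : (0:ℝ) < (Nat.totient d : ℝ) := by exact_mod_cast hφ
  have h1 : (d : ℝ) / (2 * (Nat.totient d : ℝ)) = ((d:ℝ)/(Nat.totient d : ℝ)) / 2 := by
    rw [div_div]; ring_nf
  rw [h1, Real.log_div (ne_of_gt (div_pos hdpos hφpos)) (by norm_num), hratio,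
    Real.log_prod]
  intro p hp
  have : (2:ℝ) ≤ p := by exact_mod_cast (Nat.prime_of_mem_primeFactors hp).two_le
  have : (p:ℝ) - 1 ≠ 0 := by linarith
  positivity

lemma divisors_filter_not_dvd (n p : ℕ) (hn : n ≠ 0) (hp : p.Prime) :
    n.divisors.filter (fun d => ¬ p ∣ d) = (ordCompl[p] n).divisors := by
  ext d
  simp only [Finset.mem_filter, Nat.mem_divisors]
  constructor
  · rintro ⟨⟨hdn, _⟩, hpd⟩
    refine ⟨?_, (Nat.ordCompl_pos p hn).ne'⟩
    have hcop : Nat.Coprime d (p ^ n.factorization p) :=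
      Nat.Coprime.pow_right _ ((Nat.coprime_comm.mp (hp.coprime_iff_not_dvd.mpr hpd)))
    have hdvd : d ∣ p ^ n.factorization p * ordCompl[p] n := by
      rw [Nat.ordProj_mul_ordCompl_eq_self]; exact hdn
    exact (Nat.Coprime.dvd_of_dvd_mul_left hcop hdvd)
  · rintro ⟨hdm, _⟩
    have hdn : d ∣ n := hdm.trans (Nat.ordCompl_dvd n p)
    refine ⟨⟨hdn, hn⟩, fun hpd => Nat.not_dvd_ordCompl hp hn (hpd.trans hdm)⟩


/-- The sum of the positive divisors of `n`. -/
def sigma1 (n : ℕ) : ℕ := ∑ d ∈ n.divisors, d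

/-- `KL n = ∑_{d ∣ n} d · log (d / (2 φ(d)))`. -/
noncomputable def KL (n : ℕ) : ℝ :=
  ∑ d ∈ n.divisors, (d : ℝ) * Real.log ((d : ℝ) / (2 * (Nat.totient d : ℝ)))

theorem KL_pos_of_nondeficient (n : ℕ) (hn : 0 < n) (hnondef : 2 * n ≤ sigma1 n) :
    KL n > 0 := by
  have hn0 : n ≠ 0 := hn.ne'
  -- n ≥ 2
  have hn2 : 2 ≤ n := by
    by_contra h
    interval_cases n
    simp [sigma1, Nat.divisors_one] at hnondef
  set s : ℕ → ℕ := fun p => ∑ k ∈ Finset.range (n.factorization p + 1), p ^ k with hs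
  set L : ℕ → ℝ := fun p => Real.log ((p:ℝ)/((p:ℝ)-1)) with hL
  -- prime factors of divisors
  have hPF : ∀ d ∈ n.divisors, d.primeFactors = n.primeFactors.filter (· ∣ d) := by
    intro d hd
    obtain ⟨hdn, -⟩ := Nat.mem_divisors.mp hd
    ext q
    simp only [Finset.mem_filter, Nat.mem_primeFactors]
    constructor
    · rintro ⟨hq, hqd, hd0⟩; exact ⟨⟨hq, hqd.trans hdn, hn0⟩, hqd⟩
    · rintro ⟨⟨hq, -, -⟩, hqd⟩; exact ⟨hq, hqd, (Nat.pos_of_mem_divisors hd).ne'⟩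
  have hspos : ∀ p, 0 < s p := by
    intro p
    apply Finset.sum_pos' (fun k _ => Nat.zero_le _)
    exact ⟨0, Finset.mem_range.mpr (Nat.succ_pos _), by positivity⟩
  -- multiplicative decomposition per prime
  have hmul : ∀ p ∈ n.primeFactors, sigma1 n = s p * sigma1 (ordCompl[p] n) := by
    intro p hp
    have hpp := Nat.prime_of_mem_primeFactors hp
    have hc : Nat.Coprime (p ^ n.factorization p) (ordCompl[p] n) :=
      Nat.Coprime.pow_left _ (Nat.coprime_ordCompl hpp hn0)
    have hmm := (ArithmeticFunction.isMultiplicative_sigma (k := 1)).map_mul_of_coprime hc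
    rw [Nat.ordProj_mul_ordCompl_eq_self] at hmm
    rw [ArithmeticFunction.sigma_one_apply,
      ArithmeticFunction.sigma_one_apply_prime_pow hpp,
      ArithmeticFunction.sigma_one_apply] at hmm
    exact hmm
  -- KL identity
  have hKL : KL n = ∑ p ∈ n.primeFactors,
      ((sigma1 n : ℝ) - (sigma1 (ordCompl[p] n) : ℝ)) * L p - (sigma1 n : ℝ) * Real.log 2 := by
    unfold KL
    calc ∑ d ∈ n.divisors, (d : ℝ) * Real.log ((d : ℝ) / (2 * (Nat.totient d : ℝ)))
        = ∑ d ∈ n.divisors, ((∑ p ∈ n.primeFactors, if p ∣ d then (d:ℝ) * L p else 0)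
            - (d:ℝ) * Real.log 2) := by
          refine Finset.sum_congr rfl fun d hd => ?_
          rw [logdiv d (Nat.pos_of_mem_divisors hd), mul_sub, Finset.mul_sum, hPF d hd,
            Finset.sum_filter]
      _ = (∑ p ∈ n.primeFactors, ∑ d ∈ n.divisors, if p ∣ d then (d:ℝ) * L p else 0)
            - (sigma1 n : ℝ) * Real.log 2 := by
          rw [Finset.sum_sub_distrib, ← Finset.sum_mul, Finset.sum_comm]
          congr 1
          push_cast [sigma1]
          ring
      _ = ∑ p ∈ n.primeFactors,
            ((sigma1 n : ℝ) - (sigma1 (ordCompl[p] n) : ℝ)) * L p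
            - (sigma1 n : ℝ) * Real.log 2 := by
          congr 1
          refine Finset.sum_congr rfl fun p hp => ?_
          have hpp := Nat.prime_of_mem_primeFactors hp
          rw [← Finset.sum_filter, ← Finset.sum_mul]
          congr 1
          have hpart := Finset.sum_filter_add_sum_filter_not n.divisors
            (fun d => p ∣ d) (fun d => (d:ℝ))
          rw [divisors_filter_not_dvd n p hn0 hpp] at hpart
          have h1 : ((sigma1 n : ℕ) : ℝ) = ∑ d ∈ n.divisors, (d:ℝ) := by
            push_cast [sigma1]; ring
          have h2 : ((sigma1 (ordCompl[p] n) : ℕ) : ℝ)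
              = ∑ d ∈ (ordCompl[p] n).divisors, (d:ℝ) := by
            push_cast [sigma1]; ring
          rw [h1, h2]
          linarith
  have hSigpos : (0:ℝ) < (sigma1 n : ℝ) := by
    have : 0 < sigma1 n := by omega
    exact_mod_cast this
  have hKL2 : KL n = (sigma1 n : ℝ) *
      ((∑ p ∈ n.primeFactors, (1 - 1/(s p : ℝ)) * L p) - Real.log 2) := by
    rw [hKL, mul_sub, Finset.mul_sum]
    congr 1
    refine Finset.sum_congr rfl fun p hp => ?_
    have hm := hmul p hp
    have hsne : (s p : ℝ) ≠ 0 := by exact_mod_cast (hspos p).ne'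
    have hmr : (sigma1 n : ℝ) = (s p : ℝ) * (sigma1 (ordCompl[p] n) : ℝ) := by
      exact_mod_cast congrArg (Nat.cast : ℕ → ℝ) hm
    have hoc : (sigma1 (ordCompl[p] n) : ℝ) = (sigma1 n : ℝ)/(s p : ℝ) := by
      rw [eq_div_iff hsne, hmr]; ring
    rw [hoc]
    field_simp
  have hPne : n.primeFactors.Nonempty := Nat.nonempty_primeFactors.mpr (by omega)
  have hstep : ∑ p ∈ n.primeFactors, Real.log ((s p : ℝ)/(p:ℝ)^(n.factorization p))
      < ∑ p ∈ n.primeFactors, (1 - 1/(s p : ℝ)) * L p := by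
    refine Finset.sum_lt_sum_of_nonempty hPne fun p hp => ?_
    have hpp := Nat.prime_of_mem_primeFactors hp
    have ha : 1 ≤ n.factorization p :=
      hpp.factorization_pos_of_dvd hn0 (Nat.dvd_of_mem_primeFactors hp)
    exact perprime p (n.factorization p) hpp ha
  have hSigprod : (sigma1 n : ℝ) = ∏ p ∈ n.primeFactors, (s p : ℝ) := by
    have h := Nat.sum_divisors hn0
    have h' : sigma1 n = ∏ p ∈ n.primeFactors, s p := h
    rw [h']
    push_cast
    rfl
  have hnprod : (n:ℝ) = ∏ p ∈ n.primeFactors, (p:ℝ)^(n.factorization p) := by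
    conv_lhs => rw [← Nat.factorization_prod_pow_eq_self hn0]
    rw [Finsupp.prod]
    push_cast
    rfl
  have hsne : ∀ p ∈ n.primeFactors, (s p : ℝ) ≠ 0 :=
    fun p _ => by exact_mod_cast (hspos p).ne'
  have hpane : ∀ p ∈ n.primeFactors, ((p:ℝ)^(n.factorization p)) ≠ 0 := by
    intro p hp
    have : 0 < p := Nat.pos_of_mem_primeFactors hp
    positivity
  have hnpos : (0:ℝ) < n := by exact_mod_cast hn
  have hlog2 : Real.log 2 ≤ ∑ p ∈ n.primeFactors,
      Real.log ((s p : ℝ)/(p:ℝ)^(n.factorization p)) := by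
    have h2n : (2:ℝ) ≤ (sigma1 n : ℝ) / n := by
      rw [le_div_iff₀ hnpos]
      exact_mod_cast hnondef
    calc Real.log 2 ≤ Real.log ((sigma1 n : ℝ) / n) :=
          Real.log_le_log (by norm_num) h2n
      _ = Real.log (sigma1 n : ℝ) - Real.log (n:ℝ) :=
          Real.log_div hSigpos.ne' hnpos.ne'
      _ = (∑ p ∈ n.primeFactors, Real.log (s p : ℝ))
          - ∑ p ∈ n.primeFactors, Real.log ((p:ℝ)^(n.factorization p)) := by
          rw [hSigprod, hnprod, Real.log_prod hsne, Real.log_prod hpane]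
      _ = ∑ p ∈ n.primeFactors, Real.log ((s p : ℝ)/(p:ℝ)^(n.factorization p)) := by
          rw [← Finset.sum_sub_distrib]
          exact Finset.sum_congr rfl fun p hp =>
            (Real.log_div (hsne p hp) (hpane p hp)).symm
  rw [hKL2]
  apply mul_pos hSigpos
  linarith
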